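/- Let δ ∈ (0,1) and define on ℂ the functions a(z) = -log(|z|² + δ²) (for |z|² + δ² < 1) and φ = -log a. Then φ is plurisubharmonic on the set where a > 1, i.e. where |z|² + δ² < e^{-1}: indeed ∂²φ/∂z∂z̄ = (|z|² - δ² log(|z|² + δ²)) / (log²(|z|²+δ²) (|z|²+δ²)²) ≥ 0 there. -/

import Mathlib

open Complex Real MeasureTheory

/-- Wirtinger derivative ∂/∂z = (1/2)(∂/∂x - i ∂/∂y). -/
noncomputable def wDz (f : ℂ → ℂ) (z : ℂ) : ℂ :=
  (1/2) * (fderiv ℝ f z 1 - Complex.I * fderiv ℝ f z Complex.I)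

/-- Wirtinger derivative ∂/∂z̄ = (1/2)(∂/∂x + i ∂/∂y). -/
noncomputable def wDzbar (f : ℂ → ℂ) (z : ℂ) : ℂ :=
  (1/2) * (fderiv ℝ f z 1 + Complex.I * fderiv ℝ f z Complex.I)

namespace Stmt11Aux

noncomputable def L (w : ℂ) : ℂ →L[ℝ] ℝ :=
  (2*w.re) • Complex.reCLM + (2*w.im) • Complex.imCLM

lemma L_apply (w v : ℂ) : L w v = 2*w.re*v.re + 2*w.im*v.im := by
  simp [L]

lemma hasFDerivAt_t (δ : ℝ) (w : ℂ) :
    HasFDerivAt (fun u : ℂ => Complex.normSq u + δ^2) (L w) w := by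
  have hre : HasFDerivAt (fun u : ℂ => u.re) (Complex.reCLM : ℂ →L[ℝ] ℝ) w :=
    Complex.reCLM.hasFDerivAt
  have him : HasFDerivAt (fun u : ℂ => u.im) (Complex.imCLM : ℂ →L[ℝ] ℝ) w :=
    Complex.imCLM.hasFDerivAt
  have h1 := ((hre.mul hre).add (him.mul him)).add_const (δ^2)
  have h2 : HasFDerivAt (fun u : ℂ => u.re * u.re + u.im * u.im + δ^2) (L w) w := by
    refine h1.congr_fderiv ?_
    ext v
    simp [L]
    ring
  exact h2

noncomputable def d1 (t : ℝ) : ℝ := -1/(t * Real.log t)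

noncomputable def d2 (t : ℝ) : ℝ := (Real.log t + 1)/(t * Real.log t)^2

lemma log_lt (t : ℝ) (ht : 0 < t) (ht' : t < Real.exp (-1)) : Real.log t < -1 := by
  have := Real.log_lt_log ht ht'
  rwa [Real.log_exp] at this

lemma hasDerivAt_d1src (t : ℝ) (ht : 0 < t) (ht' : t < Real.exp (-1)) :
    HasDerivAt (fun s : ℝ => -Real.log (-Real.log s)) (d1 t) t := by
  have hlog : Real.log t < -1 := log_lt t ht ht'
  have h1 : HasDerivAt (fun s : ℝ => -Real.log s) (-t⁻¹) t :=
    (Real.hasDerivAt_log ht.ne').neg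
  have h2 : HasDerivAt Real.log (-Real.log t)⁻¹ (-Real.log t) :=
    Real.hasDerivAt_log (by linarith)
  have h3 := (h2.comp t h1).neg
  refine h3.congr_deriv ?_
  have hlt : Real.log t ≠ 0 := by linarith
  rw [d1]
  field_simp

lemma hasDerivAt_d1 (t : ℝ) (ht : 0 < t) (ht' : t < Real.exp (-1)) :
    HasDerivAt d1 (d2 t) t := by
  have hlog : Real.log t < -1 := log_lt t ht ht'
  have hlt : Real.log t ≠ 0 := by linarith
  have hne : t * Real.log t ≠ 0 := mul_ne_zero ht.ne' hlt
  have h1 : HasDerivAt (fun s : ℝ => s * Real.log s) (Real.log t + 1) t := by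
    have := (hasDerivAt_id t).mul (Real.hasDerivAt_log ht.ne')
    refine this.congr_deriv ?_
    field_simp
    simp only [id]
    ring
  have h2 := (h1.inv hne).neg
  have he : d1 = fun s : ℝ => -(s * Real.log s)⁻¹ := by
    funext s; rw [d1]; ring
  rw [he]
  refine h2.congr_deriv ?_
  rw [d2]
  field_simp

lemma hasFDerivAt_inner (δ : ℝ) (hδ1 : 0 < δ) (w : ℂ)
    (hw : Complex.normSq w + δ^2 < Real.exp (-1)) :
    HasFDerivAt (fun u : ℂ => ((-Real.log (-Real.log (Complex.normSq u + δ^2)) : ℝ) : ℂ))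
      (Complex.ofRealCLM.comp ((d1 (Complex.normSq w + δ^2)) • L w)) w := by
  have ht : 0 < Complex.normSq w + δ^2 :=
    add_pos_of_nonneg_of_pos (Complex.normSq_nonneg w) (pow_pos hδ1 2)
  have h1 := (hasDerivAt_d1src _ ht hw).comp_hasFDerivAt w (hasFDerivAt_t δ w)
  exact Complex.ofRealCLM.hasFDerivAt.comp w h1

lemma wDzbar_inner (δ : ℝ) (hδ1 : 0 < δ) (w : ℂ)
    (hw : Complex.normSq w + δ^2 < Real.exp (-1)) :
    wDzbar (fun u => (↑(-Real.log (-Real.log (‖u‖ ^ 2 + δ ^ 2))) : ℂ)) w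
      = (d1 (Complex.normSq w + δ^2) : ℂ) * w := by
  have hfun : (fun u => (↑(-Real.log (-Real.log (‖u‖ ^ 2 + δ ^ 2))) : ℂ))
      = fun u : ℂ => ((-Real.log (-Real.log (Complex.normSq u + δ^2)) : ℝ) : ℂ) := by
    funext u; rw [Complex.sq_norm]
  rw [hfun]
  have hF := hasFDerivAt_inner δ hδ1 w hw
  set a := d1 (Complex.normSq w + δ^2) with ha
  rw [wDzbar, hF.fderiv]
  simp only [ContinuousLinearMap.comp_apply, ContinuousLinearMap.smul_apply,
    Complex.ofRealCLM_apply, L_apply, smul_eq_mul]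
  simp only [Complex.one_re, Complex.one_im, Complex.I_re, Complex.I_im]
  apply Complex.ext <;> simp <;> ring

theorem key (δ : ℝ) (hδ1 : 0 < δ) (z : ℂ)
    (h : Complex.normSq z + δ ^ 2 < Real.exp (-1)) :
    wDz (fun w =>
        wDzbar (fun u => (↑(-Real.log (-Real.log (‖u‖ ^ 2 + δ ^ 2))) : ℂ)) w) z
      = ((d1 (Complex.normSq z + δ^2) + d2 (Complex.normSq z + δ^2) * Complex.normSq z : ℝ) : ℂ) := by
  set t := Complex.normSq z + δ^2 with ht_def
  have ht : 0 < t :=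
    add_pos_of_nonneg_of_pos (Complex.normSq_nonneg z) (pow_pos hδ1 2)
  set G : ℂ → ℂ := fun w => (d1 (Complex.normSq w + δ^2) : ℂ) * w with hG
  have hev : (fun w =>
      wDzbar (fun u => (↑(-Real.log (-Real.log (‖u‖ ^ 2 + δ ^ 2))) : ℂ)) w)
      =ᶠ[nhds z] G := by
    have hopen : IsOpen {w : ℂ | Complex.normSq w + δ^2 < Real.exp (-1)} :=
      isOpen_lt (Complex.continuous_normSq.add continuous_const) continuous_const
    filter_upwards [hopen.mem_nhds h] with w hw
    exact wDzbar_inner δ hδ1 w hw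
  have hc : HasFDerivAt (fun w : ℂ => ((d1 (Complex.normSq w + δ^2) : ℝ) : ℂ))
      (Complex.ofRealCLM.comp ((d2 t) • L z)) z := by
    have h1 := (hasDerivAt_d1 t ht h).comp_hasFDerivAt z (hasFDerivAt_t δ z)
    exact Complex.ofRealCLM.hasFDerivAt.comp z h1
  have hid : HasFDerivAt (fun w : ℂ => w) (ContinuousLinearMap.id ℝ ℂ) z := hasFDerivAt_id z
  have hGd : HasFDerivAt G
      (((d1 t : ℂ)) • (ContinuousLinearMap.id ℝ ℂ)
        + z • (Complex.ofRealCLM.comp ((d2 t) • L z))) z := hc.mul hid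
  rw [wDz, hev.fderiv_eq, hGd.fderiv]
  simp only [ContinuousLinearMap.add_apply, ContinuousLinearMap.smul_apply,
    ContinuousLinearMap.id_apply, ContinuousLinearMap.comp_apply,
    Complex.ofRealCLM_apply, L_apply, smul_eq_mul]
  simp only [Complex.one_re, Complex.one_im, Complex.I_re, Complex.I_im]
  apply Complex.ext <;> simp [Complex.normSq_apply] <;> ring

end Stmt11Aux

theorem stmt11 (δ : ℝ) (hδ1 : 0 < δ) (hδ2 : δ < 1) (z : ℂ)
    (h : ‖z‖ ^ 2 + δ ^ 2 < Real.exp (-1)) :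
    wDz (fun w =>
        wDzbar (fun u => (↑(-Real.log (-Real.log (‖u‖ ^ 2 + δ ^ 2))) : ℂ)) w) z =
      (↑((‖z‖ ^ 2 - δ ^ 2 * Real.log (‖z‖ ^ 2 + δ ^ 2)) /
          ((Real.log (‖z‖ ^ 2 + δ ^ 2)) ^ 2 *
            (‖z‖ ^ 2 + δ ^ 2) ^ 2)) : ℂ) ∧
    0 ≤ (‖z‖ ^ 2 - δ ^ 2 * Real.log (‖z‖ ^ 2 + δ ^ 2)) /
          ((Real.log (‖z‖ ^ 2 + δ ^ 2)) ^ 2 *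
            (‖z‖ ^ 2 + δ ^ 2) ^ 2) := by
  have hsq : ‖z‖ ^ 2 = Complex.normSq z := Complex.sq_norm z
  rw [hsq] at h ⊢
  set t := Complex.normSq z + δ^2 with ht_def
  have ht : 0 < t :=
    add_pos_of_nonneg_of_pos (Complex.normSq_nonneg z) (pow_pos hδ1 2)
  have hlog : Real.log t < -1 := Stmt11Aux.log_lt t ht h
  have hlt : Real.log t ≠ 0 := by linarith
  constructor
  · rw [Stmt11Aux.key δ hδ1 z h]
    congr 1
    rw [Stmt11Aux.d1, Stmt11Aux.d2]
    rw [← ht_def]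
    field_simp
    ring
  · apply div_nonneg
    · nlinarith [Complex.normSq_nonneg z, sq_nonneg δ]
    · positivity
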